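/- Let A be a Codazzi tensor on a Riemannian manifold (M,g) with eigenvalue function λ whose eigendistribution V_λ = {Y : AY = λY} has dimension at least 2 at every point. Then D_Y λ = 0 for every vector field Y ∈ V_λ; that is, λ is constant in all directions belonging to V_λ. -/

import Mathlib

/-- Abstract axiomatization of the space of smooth vector fields `VF` on a
Riemannian manifold with point set `M`: a module over the ring of functions
`M → ℝ`, together with the metric `g`, the Levi-Civita connection `nabla`,
the directional derivative `D`, the gradient `grad` and the Lie bracket,
satisfying the usual laws. -/
structure RiemannianSetup (M : Type*) (VF : Type*) [AddCommGroup VF]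
    [Module (M → ℝ) VF] where
  g : VF → VF → M → ℝ
  nabla : VF → VF → VF
  D : VF → (M → ℝ) → M → ℝ
  grad : (M → ℝ) → VF
  bracket : VF → VF → VF
  g_symm : ∀ X Y, g X Y = g Y X
  g_addLeft : ∀ X Y Z, g (X + Y) Z = g X Z + g Y Z
  g_smulLeft : ∀ (f : M → ℝ) (X Y : VF), g (f • X) Y = f * g X Y
  g_nondeg : ∀ X Y : VF, (∀ Z, g X Z = g Y Z) → X = Y
  nabla_addRight : ∀ X Y Z, nabla X (Y + Z) = nabla X Y + nabla X Z
  nabla_addLeft : ∀ X Y Z, nabla (X + Y) Z = nabla X Z + nabla Y Z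
  nabla_smulLeft : ∀ (f : M → ℝ) (X Y : VF), nabla (f • X) Y = f • nabla X Y
  nabla_leibniz : ∀ (X : VF) (f : M → ℝ) (Y : VF),
    nabla X (f • Y) = D X f • Y + f • nabla X Y
  D_add : ∀ X (f₁ f₂ : M → ℝ), D X (f₁ + f₂) = D X f₁ + D X f₂
  D_mul : ∀ X (f₁ f₂ : M → ℝ), D X (f₁ * f₂) = D X f₁ * f₂ + f₁ * D X f₂
  D_const : ∀ X (r : ℝ), D X (fun _ => r) = 0
  D_addLeft : ∀ X Y (f : M → ℝ), D (X + Y) f = D X f + D Y f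
  D_smulLeft : ∀ (h : M → ℝ) X (f : M → ℝ), D (h • X) f = h * D X f
  compat : ∀ X Y Z, D X (g Y Z) = g (nabla X Y) Z + g Y (nabla X Z)
  torsion_free : ∀ X Y, bracket X Y = nabla X Y - nabla Y X
  grad_spec : ∀ (f : M → ℝ) (Z : VF), g (grad f) Z = D Z f

namespace RiemannianSetup

variable {M VF : Type*} [AddCommGroup VF] [Module (M → ℝ) VF]

/-- Covariant derivative `(∇_X A) Y` of a `(1,1)`-tensor `A`. -/
def covDeriv (S : RiemannianSetup M VF) (A : VF → VF) (X Y : VF) : VF :=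
  S.nabla X (A Y) - A (S.nabla X Y)

/-- A Codazzi tensor: a self-adjoint `(1,1)`-tensor with
`(∇_X A) Y = (∇_Y A) X` for all vector fields `X`, `Y`. -/
def IsCodazzi (S : RiemannianSetup M VF) (A : VF → VF) : Prop :=
  (∀ X Y, S.g (A X) Y = S.g X (A Y)) ∧
  (∀ X Y, S.covDeriv A X Y = S.covDeriv A Y X)

end RiemannianSetup

/-- If the eigendistribution `V_λ` of a Codazzi tensor has dimension at least
two at every point (for every `Y ∈ V_λ` there is a unit `X ∈ V_λ` orthogonal
to `Y`), then `D_Y λ = 0` for every `Y ∈ V_λ`. -/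
theorem codazzi_eigenvalue_constant_along_eigenspace
    {M VF : Type*} [AddCommGroup VF] [Module (M → ℝ) VF]
    (S : RiemannianSetup M VF) (A : VF → VF) (hA : S.IsCodazzi A)
    (lam : M → ℝ)
    (hdim : ∀ Y : VF, A Y = lam • Y →
      ∃ X : VF, A X = lam • X ∧ S.g X X = 1 ∧ S.g X Y = 0) :
    ∀ Y : VF, A Y = lam • Y → S.D Y lam = 0 := by
  obtain ⟨hsa, hcod⟩ := hA
  intro Y hY
  obtain ⟨X, hX, hXX, hXY⟩ := hdim Y hY
  have gneg : ∀ a b : VF, S.g (-a) b = - S.g a b := by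
    intro a b
    have := S.g_smulLeft (-1 : M → ℝ) a b
    simpa [neg_one_smul] using this
  have gsub : ∀ a b c : VF, S.g (a - b) c = S.g a c - S.g b c := by
    intro a b c
    rw [sub_eq_add_neg, S.g_addLeft, gneg, sub_eq_add_neg]
  have gA : ∀ Z, S.g (A Z) X = lam * S.g Z X := by
    intro Z
    rw [hsa Z X, hX, S.g_symm, S.g_smulLeft, S.g_symm X Z]
  have key := hcod X Y
  simp only [RiemannianSetup.covDeriv] at key
  rw [hY, hX, S.nabla_leibniz, S.nabla_leibniz] at key
  have hgeq := congrArg (fun W => S.g W X) key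
  rw [gsub, gsub, S.g_addLeft, S.g_addLeft, S.g_smulLeft, S.g_smulLeft,
      S.g_smulLeft, S.g_smulLeft, gA, gA] at hgeq
  have hYX : S.g Y X = 0 := by rw [S.g_symm]; exact hXY
  rw [hYX, hXX] at hgeq
  simpa using hgeq.symm
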